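/- Let f : ℝ^d → ℝ^d be continuous and let Ω_1, …, Ω_k ⊆ ℝ^d be subsets with ⋃_{i=1}^k Ω_i = ℝ^d such that the topological boundary ∂Ω_i of each Ω_i is contained in a finite union of spheres (sets of the form {x ∈ ℝ^d : ‖x − c‖ = ρ} with c ∈ ℝ^d, ρ > 0). Suppose that for each i = 1, …, k one has ⟨f(x) − f(y), x − y⟩ ≥ 0 for all x, y ∈ Ω_i. Then ⟨f(x) − f(y), x − y⟩ ≥ 0 for all x, y ∈ ℝ^d. -/

import Mathlib

open scoped RealInnerProductSpace

/-- A continuous real function which is locally nondecreasing at every point of an open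
interval satisfies `g a ≤ g b`. -/
lemma aux_mono_base (g : ℝ → ℝ) (hg : Continuous g) (a b : ℝ) (hab : a ≤ b)
    (hloc : ∀ t ∈ Set.Ioo a b, ∃ ε > 0, ∀ u v : ℝ,
      |u - t| < ε → |v - t| < ε → u ≤ v → g u ≤ g v) :
    g a ≤ g b := by
  rcases eq_or_lt_of_le hab with rfl | hab
  · exact le_refl _
  -- monotone on the open interval
  have mono : ∀ u ∈ Set.Ioo a b, ∀ v ∈ Set.Ioo a b, u ≤ v → g u ≤ g v := by
    intro u hu v hv huv
    set A : Set ℝ := Set.Icc u v ∩ {t | g u ≤ g t} with hA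
    have hclosed : IsClosed A := isClosed_Icc.inter (isClosed_le continuous_const hg)
    have hne : A.Nonempty := ⟨u, ⟨le_refl u, huv⟩, show g u ≤ g u from le_refl _⟩
    have hbdd : BddAbove A := (bddAbove_Icc).mono Set.inter_subset_left
    set m := sSup A with hm
    have hmA : m ∈ A := hclosed.csSup_mem hne hbdd
    have hmI : m ∈ Set.Ioo a b := ⟨hu.1.trans_le hmA.1.1, lt_of_le_of_lt hmA.1.2 hv.2⟩
    obtain ⟨ε, hε, hεm⟩ := hloc m hmI
    by_contra hgt
    have hmv : m < v := by
      rcases lt_or_eq_of_le hmA.1.2 with h | h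
      · exact h
      · exact absurd (h ▸ hmA.2) hgt
    set t := min v (m + ε / 2) with ht
    have hmt : m < t := lt_min hmv (by linarith)
    have htA : t ∈ A := by
      refine ⟨⟨hmA.1.1.trans hmt.le, min_le_left _ _⟩, ?_⟩
      have h1 : g m ≤ g t := hεm m t (by simp [hε]) (by
        rw [abs_lt]; constructor
        · linarith
        · have : t ≤ m + ε / 2 := min_le_right _ _
          linarith) hmt.le
      exact hmA.2.trans h1
    have : t ≤ m := le_csSup hbdd htA
    exact absurd this (not_le.mpr hmt)
  -- extend to endpoints by continuity
  set w := (a + b) / 2 with hw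
  have hwm : w ∈ Set.Ioo a b := ⟨by simp [hw]; linarith, by simp [hw]; linarith⟩
  have h1 : g a ≤ g w := by
    have hsub : Set.Ioo a w ⊆ {t | g t ≤ g w} := by
      intro t ht
      exact mono t ⟨ht.1, ht.2.trans hwm.2⟩ w hwm ht.2.le
    have hcl : IsClosed {t | g t ≤ g w} := isClosed_le hg continuous_const
    have : a ∈ closure (Set.Ioo a w) := by
      rw [closure_Ioo (ne_of_lt hwm.1)]
      exact ⟨le_refl _, hwm.1.le⟩
    exact (hcl.closure_subset_iff.mpr hsub) this
  have h2 : g w ≤ g b := by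
    have hsub : Set.Ioo w b ⊆ {t | g w ≤ g t} := by
      intro t ht
      exact mono w hwm t ⟨hwm.1.trans ht.1, ht.2⟩ ht.1.le
    have hcl : IsClosed {t | g w ≤ g t} := isClosed_le continuous_const hg
    have : b ∈ closure (Set.Ioo w b) := by
      rw [closure_Ioo (ne_of_lt hwm.2)]
      exact ⟨hwm.2.le, le_refl _⟩
    exact (hcl.closure_subset_iff.mpr hsub) this
  linarith

/-- Same, allowing a finite exceptional set. -/
lemma aux_mono (g : ℝ → ℝ) (hg : Continuous g) (S : Set ℝ) (hS : S.Finite) :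
    ∀ a b : ℝ, a ≤ b → (∀ t ∈ Set.Ioo a b, t ∉ S → ∃ ε > 0, ∀ u v : ℝ,
      |u - t| < ε → |v - t| < ε → u ≤ v → g u ≤ g v) → g a ≤ g b := by
  refine Set.Finite.induction_on (motive := fun S _ => ∀ a b : ℝ, a ≤ b → (∀ t ∈ Set.Ioo a b, t ∉ S → ∃ ε > 0, ∀ u v : ℝ,
      |u - t| < ε → |v - t| < ε → u ≤ v → g u ≤ g v) → g a ≤ g b) S hS ?_ ?_
  · intro a b hab hloc
    exact aux_mono_base g hg a b hab (fun t ht => hloc t ht (Set.notMem_empty t))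
  · intro s T hsT hT IH a b hab hloc
    by_cases hs : s ∈ Set.Ioo a b
    · have h1 : g a ≤ g s := by
        refine IH a s hs.1.le ?_
        intro t ht htT
        refine hloc t ⟨ht.1, ht.2.trans hs.2⟩ ?_
        simp only [Set.mem_insert_iff, not_or]
        exact ⟨ne_of_lt ht.2, htT⟩
      have h2 : g s ≤ g b := by
        refine IH s b hs.2.le ?_
        intro t ht htT
        refine hloc t ⟨hs.1.trans ht.1, ht.2⟩ ?_
        simp only [Set.mem_insert_iff, not_or]
        exact ⟨(ne_of_lt ht.1).symm, htT⟩
      linarith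
    · refine IH a b hab ?_
      intro t ht htT
      refine hloc t ht ?_
      simp only [Set.mem_insert_iff, not_or]
      exact ⟨fun h => hs (h ▸ ht), htT⟩

/-- A line meets a sphere in finitely many points. -/
lemma aux_quad_finite {E : Type*} [NormedAddCommGroup E] [InnerProductSpace ℝ E]
    (x v c : E) (hv : v ≠ 0) (ρ : ℝ) :
    {t : ℝ | ‖x + t • v - c‖ = ρ}.Finite := by
  set P : Polynomial ℝ := Polynomial.C (‖v‖ ^ 2) * Polynomial.X ^ 2 +
    Polynomial.C (2 * ⟪x - c, v⟫) * Polynomial.X +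
    Polynomial.C (‖x - c‖ ^ 2 - ρ ^ 2) with hP
  have hPne : P ≠ 0 := by
    intro h
    have h2 : P.coeff 2 = ‖v‖ ^ 2 := by
      simp only [hP, Polynomial.coeff_add, Polynomial.coeff_C_mul, Polynomial.coeff_X_pow,
        Polynomial.coeff_X, Polynomial.coeff_C]
      norm_num
    rw [h] at h2
    simp only [Polynomial.coeff_zero] at h2
    exact hv (norm_eq_zero.mp (by nlinarith [norm_nonneg v]))
  refine (Polynomial.finite_setOf_isRoot hPne).subset ?_
  intro t ht
  simp only [Set.mem_setOf_eq] at ht ⊢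
  have hsq : ‖(x - c) + t • v‖ ^ 2 = ρ ^ 2 := by
    have : x + t • v - c = (x - c) + t • v := by abel
    rw [← this, ht]
  rw [norm_add_sq_real, real_inner_smul_right, norm_smul] at hsq
  simp only [Real.norm_eq_abs, mul_pow, sq_abs] at hsq
  show P.eval t = 0
  simp only [hP, Polynomial.eval_add, Polynomial.eval_mul, Polynomial.eval_C,
    Polynomial.eval_pow, Polynomial.eval_X]
  nlinarith [hsq]

theorem local_monotonicity_implies_global
    {d : ℕ} (hd : 1 ≤ d)
    (f : EuclideanSpace ℝ (Fin d) → EuclideanSpace ℝ (Fin d)) (hf : Continuous f)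
    (k : ℕ) (Ω : Fin k → Set (EuclideanSpace ℝ (Fin d)))
    (hcover : (⋃ i, Ω i) = Set.univ)
    (hboundary : ∀ i : Fin k, ∃ (m : ℕ) (c : Fin m → EuclideanSpace ℝ (Fin d)) (ρ : Fin m → ℝ),
      (∀ j, 0 < ρ j) ∧ frontier (Ω i) ⊆ ⋃ j, Metric.sphere (c j) (ρ j))
    (hlocal : ∀ i : Fin k, ∀ x ∈ Ω i, ∀ y ∈ Ω i, 0 ≤ ⟪f x - f y, x - y⟫) :
    ∀ x y : EuclideanSpace ℝ (Fin d), 0 ≤ ⟪f x - f y, x - y⟫ := by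
  intro x y
  by_cases hxy : x = y
  · subst hxy; simp
  set v : EuclideanSpace ℝ (Fin d) := y - x with hv
  have hvne : v ≠ 0 := sub_ne_zero.mpr (Ne.symm hxy)
  set p : ℝ → EuclideanSpace ℝ (Fin d) := fun t => x + t • v with hp
  set g : ℝ → ℝ := fun t => ⟪f (p t), v⟫ with hgdef
  have hpc : Continuous p := continuous_const.add (continuous_id.smul continuous_const)
  have hgc : Continuous g := (hf.comp hpc).inner continuous_const
  choose m c ρ hρ hfr using hboundary
  set S : Set ℝ := ⋃ i : Fin k, ⋃ j : Fin (m i), {t : ℝ | ‖p t - c i j‖ = ρ i j} with hS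
  have hSfin : S.Finite :=
    Set.finite_iUnion fun i => Set.finite_iUnion fun j => aux_quad_finite x v (c i j) hvne (ρ i j)
  have key : g 0 ≤ g 1 := by
    refine aux_mono g hgc S hSfin 0 1 zero_le_one ?_
    intro t _ htS
    have hcov : p t ∈ ⋃ i, Ω i := hcover ▸ Set.mem_univ _
    obtain ⟨i, hi⟩ := Set.mem_iUnion.mp hcov
    have hnf : p t ∉ frontier (Ω i) := by
      intro hfr'
      obtain ⟨sj, hsj⟩ := Set.mem_iUnion.mp (hfr i hfr')
      exact htS (Set.mem_iUnion.mpr ⟨i, Set.mem_iUnion.mpr ⟨sj, by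
        simpa [Metric.mem_sphere, dist_eq_norm] using hsj⟩⟩)
    have hint : p t ∈ interior (Ω i) := by
      by_contra hni
      exact hnf ⟨subset_closure hi, hni⟩
    have hnb : p ⁻¹' interior (Ω i) ∈ nhds t :=
      (isOpen_interior.preimage hpc).mem_nhds hint
    obtain ⟨ε, hε, hball⟩ := Metric.mem_nhds_iff.mp hnb
    refine ⟨ε, hε, ?_⟩
    intro u w hu hw huw
    have hpu : p u ∈ Ω i := interior_subset (hball (by simpa [Real.dist_eq] using hu))
    have hpw : p w ∈ Ω i := interior_subset (hball (by simpa [Real.dist_eq] using hw))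
    have hmon : 0 ≤ ⟪f (p w) - f (p u), p w - p u⟫ := hlocal i _ hpw _ hpu
    have hdiff : p w - p u = (w - u) • v := by
      simp only [hp]
      rw [sub_smul]
      abel
    rw [hdiff, real_inner_smul_right, inner_sub_left] at hmon
    rcases eq_or_lt_of_le huw with rfl | hlt
    · exact le_refl _
    · nlinarith [hmon]
  have e0 : p 0 = x := by simp [hp]
  have e1 : p 1 = y := by simp [hp, hv]
  have hswap : ⟪f x - f y, x - y⟫ = ⟪f y - f x, y - x⟫ := by
    rw [← neg_sub (f y) (f x), ← neg_sub y x, inner_neg_neg]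
  have hdiff : ⟪f y - f x, y - x⟫ = g 1 - g 0 := by
    rw [inner_sub_left]
    simp [hgdef, e0, e1, hv]
  rw [hswap, hdiff]
  linarith
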